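/- Let A, B ∈ ℝ^{n×m}. Then B = PAQᵀ for some permutation matrices P ∈ 𝒫_n, Q ∈ 𝒫_m if and only if tr(AAᵀ) = tr(BBᵀ) and there exists Z ∈ Ψ_{m,n} with Z·vec(A) = vec(B). -/

import Mathlib

open Matrix Kronecker Finset

/-- `Ψ_{m,n}`: the convex hull of Kronecker products of permutation matrices. -/
def Psi (m n : ℕ) : Set (Matrix (Fin m × Fin n) (Fin m × Fin n) ℝ) :=
  convexHull ℝ {C | ∃ σ : Equiv.Perm (Fin m), ∃ τ : Equiv.Perm (Fin n),
    C = (σ.permMatrix ℝ) ⊗ₖ (τ.permMatrix ℝ)}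

/-- `vec`: stacking the columns of an `n × m` matrix into `ℝ^{mn}`. -/
def vec (m n : ℕ) (M : Matrix (Fin n) (Fin m) ℝ) : Fin m × Fin n → ℝ :=
  fun p => M p.2 p.1

lemma permMatrix_apply' {k : ℕ} (σ : Equiv.Perm (Fin k)) (i j : Fin k) :
    σ.permMatrix ℝ i j = if j = σ i then (1:ℝ) else 0 := by
  simp only [Equiv.Perm.permMatrix, PEquiv.toMatrix_apply, Equiv.toPEquiv_apply,
    Option.mem_def, Option.some.injEq]
  exact if_congr eq_comm rfl rfl

lemma kron_mulVec {m n : ℕ} (σ : Equiv.Perm (Fin m)) (τ : Equiv.Perm (Fin n))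
    (v : Fin m × Fin n → ℝ) :
    ((σ.permMatrix ℝ) ⊗ₖ (τ.permMatrix ℝ)).mulVec v = fun p => v (σ p.1, τ p.2) := by
  funext p
  simp only [Matrix.mulVec, dotProduct, kroneckerMap_apply, permMatrix_apply']
  rw [Fintype.sum_prod_type]
  simp [Finset.sum_ite_eq, ite_mul, mul_ite]

lemma vec_perm {m n : ℕ} (A : Matrix (Fin n) (Fin m) ℝ) (P : Equiv.Perm (Fin n))
    (Q : Equiv.Perm (Fin m)) :
    vec m n (P.permMatrix ℝ * A * (Q.permMatrix ℝ)ᵀ) = fun p => vec m n A (Q p.1, P p.2) := by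
  funext p
  simp only [_root_.vec, Matrix.mul_apply, Matrix.transpose_apply, permMatrix_apply']
  simp [Finset.sum_ite_eq, ite_mul, mul_ite, Finset.mul_sum]

lemma trace_eq_sum_sq {m n : ℕ} (A : Matrix (Fin n) (Fin m) ℝ) :
    Matrix.trace (A * Aᵀ) = ∑ p : Fin m × Fin n, (vec m n A p)^2 := by
  rw [Fintype.sum_prod_type]
  simp only [Matrix.trace, Matrix.mul_apply, Matrix.transpose_apply, Matrix.diag_apply, _root_.vec]
  rw [Finset.sum_comm]
  simp [sq]

lemma sum_sq_perm {m n : ℕ} (v : Fin m × Fin n → ℝ) (σ : Equiv.Perm (Fin m))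
    (τ : Equiv.Perm (Fin n)) :
    ∑ p : Fin m × Fin n, (v (σ p.1, τ p.2))^2 = ∑ p : Fin m × Fin n, (v p)^2 := by
  exact Fintype.sum_equiv (Equiv.prodCongr σ τ) _ _ (fun p => rfl)

lemma vec_injective {m n : ℕ} : Function.Injective (vec m n) := by
  intro M M' h
  ext i j
  exact congrFun h (j, i)

/-- `A ≈ B` (permutational equivalence) iff `tr(AAᵀ) = tr(BBᵀ)` and some
`Z ∈ Ψ_{m,n}` satisfies `Z·vec(A) = vec(B)`. -/
theorem perm_equiv_iff_lp (m n : ℕ) (A B : Matrix (Fin n) (Fin m) ℝ) :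
    (∃ (P : Equiv.Perm (Fin n)) (Q : Equiv.Perm (Fin m)),
        B = P.permMatrix ℝ * A * (Q.permMatrix ℝ)ᵀ) ↔
    (Matrix.trace (A * Aᵀ) = Matrix.trace (B * Bᵀ) ∧
      ∃ Z ∈ Psi m n, Z.mulVec (vec m n A) = vec m n B) := by
  constructor
  · rintro ⟨P, Q, rfl⟩
    constructor
    · rw [trace_eq_sum_sq, trace_eq_sum_sq, vec_perm]
      exact (sum_sq_perm (vec m n A) Q P).symm
    · refine ⟨(Q.permMatrix ℝ) ⊗ₖ (P.permMatrix ℝ), subset_convexHull ℝ _ ⟨Q, P, rfl⟩, ?_⟩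
      rw [kron_mulVec, vec_perm]
  · rintro ⟨htr, Z, hZ, hvec⟩
    rw [Psi, _root_.convexHull_eq] at hZ
    obtain ⟨ι, t, w, z, hw0, hw1, hz, hcm⟩ := hZ
    rw [Finset.centerMass_eq_of_sum_1 _ _ hw1] at hcm
    -- the convex combination of vectors
    set x : Fin m × Fin n → ℝ := vec m n B with hx
    set y : ι → Fin m × Fin n → ℝ := fun i => (z i).mulVec (vec m n A) with hy
    have hxsum : ∀ p, x p = ∑ i ∈ t, w i * y i p := by
      intro p
      rw [← hvec, ← hcm]
      simp only [Matrix.mulVec, dotProduct, hy, Finset.mul_sum]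
      rw [Finset.sum_comm]
      refine Finset.sum_congr rfl fun q _ => ?_
      rw [Matrix.sum_apply, Finset.sum_mul]
      exact Finset.sum_congr rfl fun i _ => by rw [Matrix.smul_apply, smul_eq_mul, mul_assoc]
    -- norms
    have hNy : ∀ i ∈ t, ∑ p : Fin m × Fin n, (y i p)^2 = ∑ p : Fin m × Fin n, (x p)^2 := by
      intro i hi
      obtain ⟨σ, τ, hzi⟩ := hz i hi
      have : y i = fun p => vec m n A (σ p.1, τ p.2) := by rw [hy]; simp only; rw [hzi, kron_mulVec]
      rw [this, sum_sq_perm]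
      rw [← trace_eq_sum_sq, ← trace_eq_sum_sq, htr]
    -- variance identity
    have hinner : ∑ i ∈ t, w i * (∑ p : Fin m × Fin n, y i p * x p)
        = ∑ p : Fin m × Fin n, (x p)^2 := by
      simp only [Finset.mul_sum, ← mul_assoc]
      rw [Finset.sum_comm]
      refine Finset.sum_congr rfl fun p _ => ?_
      rw [← Finset.sum_mul, ← hxsum p, sq]
    have hvar : ∑ i ∈ t, w i * (∑ p : Fin m × Fin n, (y i p - x p)^2) = 0 := by
      have expand : ∀ i ∈ t, (∑ p : Fin m × Fin n, (y i p - x p)^2)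
          = (∑ p : Fin m × Fin n, (y i p)^2) - 2 * (∑ p : Fin m × Fin n, y i p * x p)
            + ∑ p : Fin m × Fin n, (x p)^2 := by
        intro i _
        rw [Finset.mul_sum, ← Finset.sum_sub_distrib, ← Finset.sum_add_distrib]
        exact Finset.sum_congr rfl fun p _ => by ring
      calc ∑ i ∈ t, w i * (∑ p : Fin m × Fin n, (y i p - x p)^2)
          = ∑ i ∈ t, (w i * (∑ p : Fin m × Fin n, (x p)^2)
              - 2 * (w i * (∑ p : Fin m × Fin n, y i p * x p))
              + w i * (∑ p : Fin m × Fin n, (x p)^2)) := by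
            refine Finset.sum_congr rfl fun i hi => ?_
            rw [expand i hi, hNy i hi]; ring
        _ = 0 := by
            rw [Finset.sum_add_distrib, Finset.sum_sub_distrib, ← Finset.sum_mul,
              ← Finset.mul_sum, hinner, hw1]
            ring
    -- extract an index with positive weight
    have hterm : ∀ i ∈ t, w i * (∑ p : Fin m × Fin n, (y i p - x p)^2) = 0 := by
      have hnn : ∀ i ∈ t, 0 ≤ w i * (∑ p : Fin m × Fin n, (y i p - x p)^2) := fun i hi =>
        mul_nonneg (hw0 i hi) (Finset.sum_nonneg fun p _ => sq_nonneg _)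
      exact (Finset.sum_eq_zero_iff_of_nonneg hnn).mp hvar
    obtain ⟨i, hi, hwi⟩ : ∃ i ∈ t, w i ≠ 0 := by
      by_contra h
      push_neg at h
      rw [Finset.sum_eq_zero h] at hw1
      exact one_ne_zero hw1.symm
    have hsq : ∑ p : Fin m × Fin n, (y i p - x p)^2 = 0 := by
      rcases mul_eq_zero.mp (hterm i hi) with h | h
      · exact absurd h hwi
      · exact h
    have hyx : y i = x := by
      funext p
      have := (Finset.sum_eq_zero_iff_of_nonneg (fun p _ => sq_nonneg (y i p - x p))).mp hsq
        p (Finset.mem_univ p)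
      have := sq_eq_zero_iff.mp this
      linarith
    obtain ⟨σ, τ, hzi⟩ := hz i hi
    have hyi : y i = fun p => vec m n A (σ p.1, τ p.2) := by
      rw [hy]; simp only; rw [hzi, kron_mulVec]
    refine ⟨τ, σ, vec_injective ?_⟩
    rw [vec_perm, ← hx, ← hyx, hyi]
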